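/- If f : Z_k^n → Z_k depends essentially on all n ≥ 1 of its variables, then there exists a variable ordering such that the corresponding reduced ordered decision diagram D_f of f has depth exactly n + 1, i.e., contains a path from the function node to a leaf passing through non-terminal nodes labelled by all n essential variables. -/

import Mathlib

open scoped Classical

namespace Paper

/-- A `k`-valued function of `n` variables. -/
abbrev Fn (k n : ℕ) : Type := (Fin n → ZMod k) → ZMod k

/-- `x i` is an essential variable of `f`. -/
def Essential {k n : ℕ} (f : Fn k n) (i : Fin n) : Prop :=
  ∃ (a : Fin n → ZMod k) (b : ZMod k), f (Function.update a i b) ≠ f a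

/-- The set of essential variables of `f`. -/
def Ess {k n : ℕ} (f : Fn k n) : Set (Fin n) := {i | Essential f i}

/-- The subfunction `f(x i = c)`. -/
def substVar {k n : ℕ} (f : Fn k n) (i : Fin n) (c : ZMod k) : Fn k n :=
  fun a => f (Function.update a i c)

/-- Substitute the constants `c` for all variables in the set `J`. -/
noncomputable def substSet {k n : ℕ} (f : Fn k n) (J : Set (Fin n)) (c : Fin n → ZMod k) : Fn k n :=
  fun a => f (fun i => if i ∈ J then c i else a i)

/-- `g` is a simple subfunction of `f`: obtained by substituting a constant
for an essential variable of `f`. -/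
def SimpleSub {k n : ℕ} (g f : Fn k n) : Prop :=
  ∃ i ∈ Ess f, ∃ c : ZMod k, g = substVar f i c

/-- `Sub f` is the set of all subfunctions of `f` (reflexive-transitive closure of
the simple subfunction relation). -/
def Sub {k n : ℕ} (f : Fn k n) : Set (Fn k n) :=
  {g | Relation.ReflTransGen (fun u v => SimpleSub v u) f g}

/-- `M` is a separable set of variables in `f`: `M = Ess g` for some subfunction `g`. -/
def Separable {k n : ℕ} (f : Fn k n) (M : Set (Fin n)) : Prop :=
  ∃ g ∈ Sub f, Ess g = M

/-- Separability phrased via simultaneous substitution for a set of variables. -/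
def SeparableS {k n : ℕ} (f : Fn k n) (M : Set (Fin n)) : Prop :=
  ∃ (J : Set (Fin n)) (c : Fin n → ZMod k), Ess (substSet f J c) = M

/-- `J` is a set of essential variables disjoint from `M` such that every assignment of
constants to `J` destroys some variable of `M`. -/
def Kills {k n : ℕ} (f : Fn k n) (M J : Set (Fin n)) : Prop :=
  J ⊆ Ess f ∧ J ∩ M = ∅ ∧ ∀ c : Fin n → ZMod k, ¬ M ⊆ Ess (substSet f J c)

/-- `Dis f M` : the family of all distributive sets of `M` in `f`
(inclusion-minimal sets `J` with `Kills f M J`). -/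
def Dis {k n : ℕ} (f : Fn k n) (M : Set (Fin n)) : Set (Set (Fin n)) :=
  {J | Kills f M J ∧ ∀ J' ⊆ J, Kills f M J' → J' = J}

/-- `β` is an s-system of the family `F`. -/
def IsSSystem {n : ℕ} (F : Set (Set (Fin n))) (β : Set (Fin n)) : Prop :=
  (∀ P ∈ F, (β ∩ P).Nonempty) ∧ ∀ x ∈ β, ∃ P ∈ F, P ∩ β = {x}

/-- `x i` is a strongly essential variable of `f`. -/
def StronglyEssential {k n : ℕ} (f : Fn k n) (i : Fin n) : Prop :=
  i ∈ Ess f ∧ ∃ c : ZMod k, Ess (substVar f i c) = Ess f \ {i}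

/-- The number of subfunctions of `f` having exactly `m` essential variables. -/
noncomputable def subCount {k n : ℕ} (f : Fn k n) (m : ℕ) : ℕ :=
  Set.ncard {g ∈ Sub f | (Ess g).ncard = m}

/-- `IsImp f l c` : the list `l` of (variable, constant) substitutions together with the
final value `c` is an implementation of `f`, i.e. a root-to-leaf path in a reduced
ordered decision diagram of `f`: each substituted variable is essential in the current
subfunction, and the final subfunction is the constant `c`. -/
inductive IsImp {k n : ℕ} : Fn k n → List (Fin n × ZMod k) → ZMod k → Prop
  | const (f : Fn k n) (c : ZMod k) : (∀ a, f a = c) → IsImp f [] c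
  | step (f : Fn k n) (i : Fin n) (a : ZMod k) (l : List (Fin n × ZMod k)) (c : ZMod k) :
      i ∈ Ess f → IsImp (substVar f i a) l c → IsImp f ((i, a) :: l) c

/-- The number of implementations of `f`. -/
noncomputable def imp {k n : ℕ} (f : Fn k n) : ℕ :=
  Set.ncard {p : List (Fin n × ZMod k) × ZMod k | IsImp f p.1 p.2}

end Paper


namespace PaperAux

open Paper

lemma ess_substVar_subset {k n : ℕ} (f : Fn k n) (i : Fin n) (c : ZMod k) :
    Ess (substVar f i c) ⊆ Ess f \ {i} := by
  intro j hj
  obtain ⟨a, b, hab⟩ := hj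
  unfold substVar at hab
  have hji : j ≠ i := by
    rintro rfl
    rw [Function.update_idem] at hab
    exact hab rfl
  refine ⟨⟨Function.update a i c, b, ?_⟩, hji⟩
  rwa [Function.update_comm hji.symm]

lemma update_eq_of_eq {α β : Type*} [DecidableEq α] (f : α → β) (a : α) (v : β)
    (h : f a = v) : Function.update f a v = f := by
  subst h
  exact Function.update_eq_self a f

lemma const_of_ess_empty {k n : ℕ} (f : Fn k n) (h : Ess f = ∅) :
    ∃ d : ZMod k, ∀ a, f a = d := by
  have hno : ∀ (i : Fin n) a b, f (Function.update a i b) = f a := by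
    intro i a b
    by_contra hc
    have : i ∈ Ess f := ⟨a, b, hc⟩
    simp [h] at this
  refine ⟨f (fun _ => 0), fun a => ?_⟩
  set b : Fin n → ZMod k := fun _ => 0 with hb
  have key : ∀ s : Finset (Fin n), f (fun j => if j ∈ s then b j else a j) = f a := by
    intro s
    induction s using Finset.induction_on with
    | empty => simp
    | @insert i s hi ih =>
      have he : (fun j => if j ∈ insert i s then b j else a j)
          = Function.update (fun j => if j ∈ s then b j else a j) i (b i) := by
        funext j
        by_cases hji : j = i
        · subst hji; simp
        · simp [Function.update_of_ne hji, hji]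
      rw [he, hno, ih]
  have := key Finset.univ
  simp only [Finset.mem_univ, if_true] at this
  rw [← this]

lemma exists_strong {k n : ℕ} (f : Fn k n) (hne : (Ess f).Nonempty) :
    ∃ i ∈ Ess f, ∃ c : ZMod k, Ess (substVar f i c) = Ess f \ {i} := by
  by_contra hcon
  push_neg at hcon
  set T : Set ℕ := {m | ∃ i ∈ Ess f, ∃ c : ZMod k, (Ess (substVar f i c)).ncard = m} with hT
  obtain ⟨i0, hi0⟩ := hne
  have hTne : T.Nonempty := ⟨_, i0, hi0, 0, rfl⟩
  have hbdd : BddAbove T := by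
    refine ⟨n, ?_⟩
    rintro m ⟨i, hi, c, rfl⟩
    calc (Ess (substVar f i c)).ncard ≤ (Set.univ : Set (Fin n)).ncard :=
          Set.ncard_le_ncard (Set.subset_univ _) Set.finite_univ
      _ = n := by simp [Set.ncard_univ]
  obtain ⟨i, hi, c, hic⟩ := Nat.sSup_mem hTne hbdd
  have hsub := ess_substVar_subset f i c
  have hneq := hcon i hi c
  obtain ⟨j, hj1, hj2⟩ := Set.exists_of_ssubset (hsub.ssubset_of_ne hneq)
  obtain ⟨hjEss, hji'⟩ := hj1
  have hji : j ≠ i := hji'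
  have hjind : ∀ (x : Fin n → ZMod k) (t : ZMod k),
      f (Function.update (Function.update x j t) i c) = f (Function.update x i c) := by
    intro x t
    by_contra hc
    exact hj2 ⟨x, t, hc⟩
  obtain ⟨d, hdi⟩ : ∃ d : ZMod k, i ∈ Ess (substVar f j d) := by
    obtain ⟨a, b, hab⟩ := hjEss
    have key := hjind a b
    have hcases : f a ≠ f (Function.update a i c) ∨
        f (Function.update a j b) ≠ f (Function.update (Function.update a j b) i c) := by
      by_contra hc
      push_neg at hc
      exact hab (by rw [hc.2, key, ← hc.1])
    rcases hcases with h | h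
    · refine ⟨a j, a, c, ?_⟩
      show f (Function.update (Function.update a i c) j (a j))
          ≠ f (Function.update a j (a j))
      have e1 : Function.update (Function.update a i c) j (a j)
          = Function.update a i c :=
        update_eq_of_eq _ j (a j) (Function.update_of_ne hji c a)
      rw [e1, Function.update_eq_self]
      exact h.symm
    · refine ⟨b, Function.update a j b, c, ?_⟩
      show f (Function.update (Function.update (Function.update a j b) i c) j b)
          ≠ f (Function.update (Function.update a j b) j b)
      have e1 : Function.update (Function.update (Function.update a j b) i c) j b
          = Function.update (Function.update a j b) i c := by
        rw [Function.update_comm hji.symm, Function.update_idem]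
      rw [e1, Function.update_idem]
      exact h.symm
  have hA : Ess (substVar f i c) ⊆ Ess (substVar f j d) := by
    intro l hl
    have hli : l ≠ i := fun he => (hsub hl).2 (by simp [he])
    have hlj : l ≠ j := by rintro rfl; exact hj2 hl
    obtain ⟨a, b, hab⟩ := hl
    unfold substVar at hab
    refine ⟨Function.update (Function.update a j d) i c, b, ?_⟩
    show f (Function.update (Function.update
          (Function.update (Function.update a j d) i c) l b) j d)
        ≠ f (Function.update (Function.update (Function.update a j d) i c) j d)
    have hpj : (Function.update (Function.update a j d) i c) j = d := by
      rw [Function.update_of_ne hji, Function.update_self]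
    have e2 : Function.update (Function.update (Function.update a j d) i c) j d
        = Function.update (Function.update a j d) i c := update_eq_of_eq _ j d hpj
    have hqj : (Function.update (Function.update (Function.update a j d) i c) l b) j
        = d := by
      rw [Function.update_of_ne hlj.symm, hpj]
    have e1 : Function.update (Function.update
          (Function.update (Function.update a j d) i c) l b) j d
        = Function.update (Function.update (Function.update a j d) i c) l b :=
      update_eq_of_eq _ j d hqj
    rw [e1, e2]
    have e4 : Function.update (Function.update (Function.update a j d) i c) l b
        = Function.update (Function.update (Function.update a l b) j d) i c := by
      rw [Function.update_comm hli.symm, Function.update_comm hlj.symm]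
    rw [e4, hjind, hjind]
    exact hab
  have hinot : i ∉ Ess (substVar f i c) := fun h => (hsub h).2 rfl
  have h1 : (Ess (substVar f i c)).ncard + 1 ≤ (Ess (substVar f j d)).ncard := by
    rw [← Set.ncard_insert_of_notMem hinot]
    exact Set.ncard_le_ncard (Set.insert_subset hdi hA) (Set.toFinite _)
  have h2 : (Ess (substVar f j d)).ncard ≤ sSup T :=
    le_csSup hbdd ⟨j, hjEss, d, rfl⟩
  omega

lemma chain {k n : ℕ} : ∀ (m : ℕ) (f : Fn k n), (Ess f).ncard = m →
    ∃ g : ℕ → Fn k n, g m = f ∧ (∀ t < m, SimpleSub (g t) (g (t + 1))) ∧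
      ∃ d : ZMod k, ∀ a, g 0 a = d := by
  intro m
  induction m with
  | zero =>
    intro f hf
    have he : Ess f = ∅ := (Set.ncard_eq_zero (Set.toFinite _)).mp hf
    obtain ⟨d, hd⟩ := const_of_ess_empty f he
    exact ⟨fun _ => f, rfl, by intro t ht; omega, d, hd⟩
  | succ m ih =>
    intro f hf
    have hne : (Ess f).Nonempty := by
      rcases Set.eq_empty_or_nonempty (Ess f) with h | h
      · rw [h] at hf; simp at hf
      · exact h
    obtain ⟨i, hi, c, hic⟩ := exists_strong f hne
    have hcard : (Ess (substVar f i c)).ncard = m := by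
      rw [hic, Set.ncard_diff_singleton_of_mem hi, hf]
      omega
    obtain ⟨g, hg1, hg2, hg3⟩ := ih (substVar f i c) hcard
    refine ⟨fun t => if t = m + 1 then f else g t, by simp, ?_, ?_⟩
    · intro t ht
      by_cases h : t = m
      · subst h
        have hm : t ≠ t + 1 := by omega
        simp only [if_neg hm, if_pos rfl]
        rw [hg1]
        exact ⟨i, hi, c, rfl⟩
      · have h1 : t ≠ m + 1 := by omega
        have h2 : t + 1 ≠ m + 1 := by omega
        simp only [if_neg h1, if_neg h2]
        exact hg2 t (by omega)
    · obtain ⟨d, hd⟩ := hg3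
      refine ⟨d, fun a => ?_⟩
      show (if (0 : ℕ) = m + 1 then f else g 0) a = d
      rw [if_neg (by omega : ¬ (0 : ℕ) = m + 1)]
      exact hd a

end PaperAux

open Paper in
/-- if `f` depends essentially on all `n ≥ 1` variables, then some ordered
decision diagram of `f` has depth `n + 1`; equivalently there is a chain
`f = g_n ≻ g_{n-1} ≻ ⋯ ≻ g_0` of simple subfunctions (each step substituting a constant
for a variable essential at that moment) of length `n` ending in a constant function. -/
theorem exists_full_depth_odd {k n : ℕ} (hk : 2 ≤ k) (hn : 1 ≤ n) (f : Fn k n)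
    (hfull : Ess f = Set.univ) :
    ∃ g : ℕ → Fn k n, g n = f ∧
      (∀ t < n, SimpleSub (g t) (g (t + 1))) ∧
      (∃ d : ZMod k, ∀ a, g 0 a = d) := by
  have hc : (Ess f).ncard = n := by
    rw [hfull, Set.ncard_univ]
    simp
  exact PaperAux.chain n f hc
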